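/- (Inclusion-preservation of the Lorenz product) Let α, α', β, β' be n-dimensional finite signed vector measures, possibly on different measurable spaces. If LH(α) ⊆ LH(α') and LH(β) ⊆ LH(β'), then LH(α × β) ⊆ LH(α' × β'), where α × β denotes the n-dimensional vector measure whose i-th coordinate is the product measure αᵢ × βᵢ. -/

import Mathlib

open MeasureTheory

/-- The Lorenz hull of an `n`-dimensional finite signed vector measure:
the convex hull of its range in `ℝⁿ`. -/
def lorenzHull {n : ℕ} {S : Type*} [MeasurableSpace S]
    (α : Fin n → MeasureTheory.SignedMeasure S) : Set (Fin n → ℝ) :=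
  convexHull ℝ {x | ∃ A : Set S, MeasurableSet A ∧ x = fun i => α i A}

namespace LorenzProof

open Pointwise

variable {n : ℕ}

/-- The range set of a vector measure. -/
def rset {S : Type*} [MeasurableSpace S] (γ : Fin n → SignedMeasure S) : Set (Fin n → ℝ) :=
  {x | ∃ A : Set S, MeasurableSet A ∧ x = fun i => γ i A}

lemma lorenzHull_eq {S : Type*} [MeasurableSpace S] (γ : Fin n → SignedMeasure S) :
    lorenzHull γ = convexHull ℝ (rset γ) := rfl

/-- Pairing with `m` as a linear map. -/
def dotL (m : Fin n → ℝ) : (Fin n → ℝ) →ₗ[ℝ] ℝ where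
  toFun z := ∑ i, m i * z i
  map_add' x y := by simp [mul_add, Finset.sum_add_distrib]
  map_smul' c x := by
    simp only [Pi.smul_apply, smul_eq_mul, RingHom.id_apply, Finset.mul_sum]
    exact Finset.sum_congr rfl fun i _ => by ring

lemma dotL_apply (m z : Fin n → ℝ) : dotL m z = ∑ i, m i * z i := rfl

/-- A linear functional bound on generators extends to the hull. -/
lemma dot_le_of_mem_hull {S : Type*} [MeasurableSpace S] {γ : Fin n → SignedMeasure S}
    {y : Fin n → ℝ} (hy : y ∈ lorenzHull γ) (m : Fin n → ℝ) {c : ℝ}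
    (hb : ∀ A : Set S, MeasurableSet A → ∑ i, m i * γ i A ≤ c) :
    ∑ i, m i * y i ≤ c := by
  have hsub : lorenzHull γ ⊆ {z | dotL m z ≤ c} := by
    rw [lorenzHull_eq]
    refine convexHull_min ?_ (convex_halfSpace_le (dotL m).isLinear c)
    rintro z ⟨A, hA, rfl⟩
    exact hb A hA
  exact hsub hy

/-- Every finite signed vector measure has a density representation w.r.t. a finite measure. -/
lemma exists_density {S : Type*} [MeasurableSpace S] (γ : Fin n → SignedMeasure S) :
    ∃ (ρ : Measure S) (q : Fin n → S → ℝ), IsFiniteMeasure ρ ∧ (∀ i, Measurable (q i)) ∧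
      (∀ i, Integrable (q i) ρ) ∧ ∀ i (A : Set S), MeasurableSet A → γ i A = ∫ x in A, q i x ∂ρ := by
  classical
  have hfin : ∀ s : SignedMeasure S, IsFiniteMeasure s.totalVariation := by
    intro s; unfold SignedMeasure.totalVariation; infer_instance
  set ρ : Measure S := ∑ i, (γ i).totalVariation with hρ
  have hρfin : IsFiniteMeasure ρ := by
    constructor
    rw [hρ, Measure.coe_finset_sum]
    simp only [Finset.sum_apply]
    exact ENNReal.sum_lt_top.mpr fun i _ => @measure_lt_top _ _ _ (hfin (γ i)) _
  haveI := hρfin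
  have hac : ∀ i, γ i ≪ᵥ ρ.toENNRealVectorMeasure := by
    intro i
    rw [SignedMeasure.absolutelyContinuous_ennreal_iff,
      VectorMeasure.ennrealToMeasure_toENNRealVectorMeasure]
    refine Measure.AbsolutelyContinuous.mk fun A hA h0 => ?_
    have hle : (γ i).totalVariation A ≤ ρ A := by
      rw [hρ, Measure.coe_finset_sum]
      simp only [Finset.sum_apply]
      exact Finset.single_le_sum (f := fun j => (γ j).totalVariation A)
        (fun j _ => zero_le) (Finset.mem_univ i)
    exact le_antisymm (h0 ▸ hle) zero_le
  refine ⟨ρ, fun i => (γ i).rnDeriv ρ, hρfin, fun i => SignedMeasure.measurable_rnDeriv _ _,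
    fun i => SignedMeasure.integrable_rnDeriv _ _, fun i A hA => ?_⟩
  conv_lhs => rw [← SignedMeasure.withDensityᵥ_rnDeriv_eq (γ i) ρ (hac i)]
  rw [withDensityᵥ_apply (SignedMeasure.integrable_rnDeriv _ _) hA]

section Integrals

variable {Ω : Type*} [MeasurableSpace Ω] {ρ : Measure Ω} {f : Ω → ℝ}

lemma integral_pos_part_eq (hm : Measurable f) :
    ∫ x, max (f x) 0 ∂ρ = ∫ x in {x | 0 < f x}, f x ∂ρ := by
  have : (fun x => max (f x) 0) = Set.indicator {x | 0 < f x} f := by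
    funext x
    rw [Set.indicator_apply]
    split_ifs with h
    · exact max_eq_left (le_of_lt h)
    · exact max_eq_right (not_lt.mp fun hc => h hc)
  rw [this, integral_indicator (measurableSet_lt measurable_const hm)]

lemma setIntegral_le_pos_part (hi : Integrable f ρ) (A : Set Ω) :
    ∫ x in A, f x ∂ρ ≤ ∫ x, max (f x) 0 ∂ρ := by
  calc ∫ x in A, f x ∂ρ ≤ ∫ x in A, max (f x) 0 ∂ρ :=
        integral_mono hi.integrableOn hi.pos_part.integrableOn fun x => le_max_left _ _
    _ ≤ ∫ x, max (f x) 0 ∂ρ :=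
        setIntegral_le_integral hi.pos_part (Filter.Eventually.of_forall fun x => le_max_right _ _)

end Integrals

lemma dot_density {S : Type*} [MeasurableSpace S] {γ : Fin n → SignedMeasure S} {ρ : Measure S}
    {q : Fin n → S → ℝ} (hint : ∀ i, Integrable (q i) ρ)
    (happ : ∀ i (A : Set S), MeasurableSet A → γ i A = ∫ x in A, q i x ∂ρ)
    (m : Fin n → ℝ) {A : Set S} (hA : MeasurableSet A) :
    ∑ i, m i * γ i A = ∫ x in A, (∑ i, m i * q i x) ∂ρ := by
  rw [integral_finset_sum _ (fun i _ => ((hint i).const_mul (m i)).integrableOn)]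
  refine Finset.sum_congr rfl fun i _ => ?_
  rw [happ i A hA, integral_const_mul]

lemma support_mono {S S' : Type*} [MeasurableSpace S] [MeasurableSpace S']
    {γ : Fin n → SignedMeasure S} {γ' : Fin n → SignedMeasure S'}
    {ρ : Measure S} {q : Fin n → S → ℝ} {ρ' : Measure S'} {q' : Fin n → S' → ℝ}
    (hqm : ∀ i, Measurable (q i)) (hqi : ∀ i, Integrable (q i) ρ)
    (happ : ∀ i (A : Set S), MeasurableSet A → γ i A = ∫ x in A, q i x ∂ρ)
    (hq'i : ∀ i, Integrable (q' i) ρ')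
    (happ' : ∀ i (A : Set S'), MeasurableSet A → γ' i A = ∫ x in A, q' i x ∂ρ')
    (hsub : lorenzHull γ ⊆ lorenzHull γ') (m : Fin n → ℝ) :
    ∫ x, max (∑ i, m i * q i x) 0 ∂ρ ≤ ∫ x, max (∑ i, m i * q' i x) 0 ∂ρ' := by
  have hFm : Measurable fun x => ∑ i, m i * q i x :=
    Finset.measurable_sum _ fun i _ => (hqm i).const_mul _
  have hFi : Integrable (fun x => ∑ i, m i * q i x) ρ :=
    integrable_finset_sum _ fun i _ => (hqi i).const_mul _
  have hP : MeasurableSet {x | 0 < ∑ i, m i * q i x} := measurableSet_lt measurable_const hFm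
  rw [integral_pos_part_eq hFm, ← dot_density hqi happ m hP]
  have hmem : (fun i => γ i {x | 0 < ∑ i, m i * q i x}) ∈ lorenzHull γ' :=
    hsub (subset_convexHull _ _ ⟨_, hP, rfl⟩)
  refine dot_le_of_mem_hull hmem m fun A hA => ?_
  rw [dot_density hq'i happ' m hA]
  exact setIntegral_le_pos_part (integrable_finset_sum _ fun i _ => (hq'i i).const_mul _) A

lemma prod_density {S T : Type*} [MeasurableSpace S] [MeasurableSpace T]
    {α : Fin n → SignedMeasure S} {β : Fin n → SignedMeasure T}
    {ω : Fin n → SignedMeasure (S × T)}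
    (hω : ∀ i (A : Set S) (B : Set T), MeasurableSet A → MeasurableSet B →
      ω i (A ×ˢ B) = α i A * β i B)
    {μ : Measure S} {g : Fin n → S → ℝ} {ν : Measure T} {k : Fin n → T → ℝ}
    [IsFiniteMeasure μ] [IsFiniteMeasure ν]
    (hgi : ∀ i, Integrable (g i) μ)
    (hga : ∀ i (A : Set S), MeasurableSet A → α i A = ∫ x in A, g i x ∂μ)
    (hki : ∀ i, Integrable (k i) ν)
    (hka : ∀ i (B : Set T), MeasurableSet B → β i B = ∫ y in B, k i y ∂ν)
    (i : Fin n) :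
    ∀ ⦃C : Set (S × T)⦄, MeasurableSet C →
      ω i C = ∫ p in C, g i p.1 * k i p.2 ∂(μ.prod ν) := by
  have hint : Integrable (fun p : S × T => g i p.1 * k i p.2) (μ.prod ν) :=
    (hgi i).mul_prod (hki i)
  refine MeasurableSpace.induction_on_inter generateFrom_prod.symm isPiSystem_prod ?_ ?_ ?_ ?_
  · simp
  · rintro t ⟨A, hA, B, hB, rfl⟩
    rw [hω i A B hA hB, hga i A hA, hka i B hB, ← Measure.prod_restrict, integral_prod_mul]
  · intro t ht hrec
    have huniv : ω i Set.univ = ∫ p, g i p.1 * k i p.2 ∂(μ.prod ν) := by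
      have h := hω i Set.univ Set.univ MeasurableSet.univ MeasurableSet.univ
      rw [Set.univ_prod_univ] at h
      rw [h, hga i Set.univ MeasurableSet.univ, hka i Set.univ MeasurableSet.univ,
        Measure.restrict_univ, Measure.restrict_univ, ← integral_prod_mul]
    have hsplit := (ω i).of_union disjoint_compl_right ht ht.compl
    rw [Set.union_compl_self] at hsplit
    have hisplit := integral_add_compl ht hint
    linarith
  · intro f hd hm hrec
    rw [(ω i).of_disjoint_iUnion hm hd, integral_iUnion hm hd hint.integrableOn]
    exact tsum_congr fun j => hrec j

lemma chain {S T S' T' : Type*}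
    [MeasurableSpace S] [MeasurableSpace T] [MeasurableSpace S'] [MeasurableSpace T']
    {α : Fin n → SignedMeasure S} {α' : Fin n → SignedMeasure S'}
    {β : Fin n → SignedMeasure T} {β' : Fin n → SignedMeasure T'}
    {μ : Measure S} {g : Fin n → S → ℝ} {ν : Measure T} {k : Fin n → T → ℝ}
    {μ' : Measure S'} {g' : Fin n → S' → ℝ} {ν' : Measure T'} {k' : Fin n → T' → ℝ}
    [IsFiniteMeasure μ] [IsFiniteMeasure ν] [IsFiniteMeasure μ'] [IsFiniteMeasure ν']
    (hgm : ∀ i, Measurable (g i)) (hgi : ∀ i, Integrable (g i) μ)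
    (hga : ∀ i (A : Set S), MeasurableSet A → α i A = ∫ x in A, g i x ∂μ)
    (hkm : ∀ i, Measurable (k i)) (hki : ∀ i, Integrable (k i) ν)
    (hka : ∀ i (B : Set T), MeasurableSet B → β i B = ∫ y in B, k i y ∂ν)
    (hg'm : ∀ i, Measurable (g' i)) (hg'i : ∀ i, Integrable (g' i) μ')
    (hg'a : ∀ i (A : Set S'), MeasurableSet A → α' i A = ∫ x in A, g' i x ∂μ')
    (hk'm : ∀ i, Measurable (k' i)) (hk'i : ∀ i, Integrable (k' i) ν')
    (hk'a : ∀ i (B : Set T'), MeasurableSet B → β' i B = ∫ y in B, k' i y ∂ν')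
    (hα : lorenzHull α ⊆ lorenzHull α') (hβ : lorenzHull β ⊆ lorenzHull β')
    (ℓ : Fin n → ℝ) :
    ∫ p, max (∑ i, ℓ i * (g i p.1 * k i p.2)) 0 ∂(μ.prod ν)
      ≤ ∫ p, max (∑ i, ℓ i * (g' i p.1 * k' i p.2)) 0 ∂(μ'.prod ν') := by
  have hF : Integrable (fun p : S × T => max (∑ i, ℓ i * (g i p.1 * k i p.2)) 0) (μ.prod ν) :=
    (integrable_finset_sum _ fun i _ => ((hgi i).mul_prod (hki i)).const_mul (ℓ i)).pos_part
  have hG : Integrable (fun q : T × S' => max (∑ i, (ℓ i * k i q.1) * g' i q.2) 0) (ν.prod μ') :=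
    (integrable_finset_sum _ fun i _ => ((hki i).const_mul (ℓ i)).mul_prod (hg'i i)).pos_part
  have hH : Integrable (fun q : S' × T' => max (∑ i, (ℓ i * g' i q.1) * k' i q.2) 0)
      (μ'.prod ν') :=
    (integrable_finset_sum _ fun i _ => ((hg'i i).const_mul (ℓ i)).mul_prod (hk'i i)).pos_part
  calc ∫ p, max (∑ i, ℓ i * (g i p.1 * k i p.2)) 0 ∂(μ.prod ν)
      = ∫ t, ∫ s, max (∑ i, ℓ i * (g i s * k i t)) 0 ∂μ ∂ν := by
        rw [integral_prod _ hF]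
        exact integral_integral_swap hF
    _ ≤ ∫ t, ∫ s', max (∑ i, (ℓ i * k i t) * g' i s') 0 ∂μ' ∂ν := by
        refine integral_mono hF.integral_prod_right hG.integral_prod_left fun t => ?_
        have he : ∀ s : S, (∑ i, ℓ i * (g i s * k i t)) = ∑ i, (ℓ i * k i t) * g i s :=
          fun s => Finset.sum_congr rfl fun i _ => by ring
        simp only [he]
        exact support_mono hgm hgi hga hg'i hg'a hα (fun i => ℓ i * k i t)
    _ = ∫ s', ∫ t, max (∑ i, (ℓ i * k i t) * g' i s') 0 ∂ν ∂μ' := by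
        rw [← integral_prod _ hG]
        exact integral_prod_symm _ hG
    _ ≤ ∫ s', ∫ t', max (∑ i, (ℓ i * g' i s') * k' i t') 0 ∂ν' ∂μ' := by
        refine integral_mono hG.integral_prod_right hH.integral_prod_left fun s' => ?_
        have he : ∀ t : T, (∑ i, (ℓ i * k i t) * g' i s') = ∑ i, (ℓ i * g' i s') * k i t :=
          fun t => Finset.sum_congr rfl fun i _ => by ring
        simp only [he]
        exact support_mono hkm hki hka hk'i hk'a hβ (fun i => ℓ i * g' i s')
    _ = ∫ p, max (∑ i, ℓ i * (g' i p.1 * k' i p.2)) 0 ∂(μ'.prod ν') := by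
        rw [← integral_prod _ hH]
        have he : ∀ q : S' × T',
            (∑ i, (ℓ i * g' i q.1) * k' i q.2) = ∑ i, ℓ i * (g' i q.1 * k' i q.2) :=
          fun q => Finset.sum_congr rfl fun i _ => by ring
        simp only [he]

lemma zero_mem_rset {S : Type*} [MeasurableSpace S] (γ : Fin n → SignedMeasure S) :
    (0 : Fin n → ℝ) ∈ rset γ :=
  ⟨∅, MeasurableSet.empty, by funext i; simp⟩

lemma linear_eq_dot (L : (Fin n → ℝ) →ₗ[ℝ] ℝ) (z : Fin n → ℝ) :
    L z = ∑ i, L (Pi.single i 1) * z i := by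
  conv_lhs => rw [← Finset.univ_sum_single z]
  rw [map_sum]
  refine Finset.sum_congr rfl fun i _ => ?_
  have : Pi.single i (z i) = z i • (Pi.single i 1 : Fin n → ℝ) := by
    funext j
    by_cases h : j = i
    · subst h; simp
    · simp [Pi.single_apply, h]
  rw [this, L.map_smul, smul_eq_mul, mul_comm]

lemma attain {Ω : Type*} [MeasurableSpace Ω] {ρ : Measure Ω} [IsFiniteMeasure ρ]
    {γ : Fin n → SignedMeasure Ω} {q : Fin n → Ω → ℝ}
    (hqm : ∀ i, Measurable (q i)) (hqi : ∀ i, Integrable (q i) ρ)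
    (happ : ∀ i (A : Set Ω), MeasurableSet A → γ i A = ∫ x in A, q i x ∂ρ)
    (ℓ : Fin n → ℝ) :
    ∃ A : Set Ω, MeasurableSet A ∧
      ∑ i, ℓ i * γ i A = ∫ s, max (∑ i, ℓ i * q i s) 0 ∂ρ := by
  have hFm : Measurable fun s => ∑ i, ℓ i * q i s :=
    Finset.measurable_sum _ fun i _ => (hqm i).const_mul _
  have hP : MeasurableSet {s | 0 < ∑ i, ℓ i * q i s} := measurableSet_lt measurable_const hFm
  exact ⟨_, hP, by rw [dot_density hqi happ ℓ hP, integral_pos_part_eq hFm]⟩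

lemma hull_subset_span {S : Type*} [MeasurableSpace S] (γ : Fin n → SignedMeasure S) :
    lorenzHull γ ⊆ (Submodule.span ℝ (rset γ) : Set (Fin n → ℝ)) := by
  rw [lorenzHull_eq]
  exact convexHull_min Submodule.subset_span (Submodule.span ℝ (rset γ)).convex

lemma branch2 {Ω : Type*} [MeasurableSpace Ω] {ρ : Measure Ω} [IsFiniteMeasure ρ]
    {γ : Fin n → SignedMeasure Ω} {q : Fin n → Ω → ℝ}
    (hqm : ∀ i, Measurable (q i)) (hqi : ∀ i, Integrable (q i) ρ)
    (happ : ∀ i (A : Set Ω), MeasurableSet A → γ i A = ∫ x in A, q i x ∂ρ)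
    {x : Fin n → ℝ}
    (hx : ∀ ℓ : Fin n → ℝ, ∑ i, ℓ i * x i ≤ ∫ s, max (∑ i, ℓ i * q i s) 0 ∂ρ)
    (hno : ∀ ℓ : Fin n → ℝ, (∑ i, ℓ i * x i = ∫ s, max (∑ i, ℓ i * q i s) 0 ∂ρ) →
       ∀ A : Set Ω, MeasurableSet A → ∑ i, ℓ i * γ i A = 0) :
    x ∈ lorenzHull γ := by
  classical
  by_contra hxc
  by_cases hclos : x ∈ closure (lorenzHull γ)
  · -- supporting hyperplane case
    set V : Submodule ℝ (Fin n → ℝ) := Submodule.span ℝ (rset γ) with hV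
    have hhullV : lorenzHull γ ⊆ (V : Set (Fin n → ℝ)) := hull_subset_span γ
    have hVclosed : IsClosed (V : Set (Fin n → ℝ)) := V.closed_of_finiteDimensional
    have hxV : x ∈ V := closure_minimal hhullV hVclosed hclos
    -- work inside V
    set C : Set V := (Subtype.val) ⁻¹' (lorenzHull γ) with hC
    have hCconv : Convex ℝ C := (convex_convexHull ℝ _).linear_preimage V.subtype
    have hCspan : Submodule.span ℝ C = (⊤ : Submodule ℝ V) := by
      apply Submodule.map_injective_of_injective V.injective_subtype
      rw [Submodule.map_span, Submodule.map_top, Submodule.range_subtype]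
      have himg : V.subtype '' C = lorenzHull γ := by
        rw [hC]
        show (Subtype.val '' (Subtype.val ⁻¹' lorenzHull γ)) = lorenzHull γ
        rw [Set.image_preimage_eq_inter_range, Subtype.range_coe_subtype]
        exact Set.inter_eq_left.mpr hhullV
      rw [himg]
      refine le_antisymm (Submodule.span_le.mpr hhullV) ?_
      rw [hV]
      exact Submodule.span_le.mpr
        ((Set.Subset.trans (subset_convexHull ℝ _) Submodule.subset_span) : rset γ ⊆ _)
    have hzeroC : (0 : V) ∈ C := by
      have : (0 : Fin n → ℝ) ∈ lorenzHull γ :=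
        subset_convexHull ℝ _ (zero_mem_rset γ)
      simpa [hC] using this
    have hCaff : affineSpan ℝ C = ⊤ := by
      rw [AffineSubspace.affineSpan_eq_top_iff_vectorSpan_eq_top_of_nonempty ℝ ↥V ↥V ⟨0, hzeroC⟩]
      rw [vectorSpan_def]
      rw [eq_top_iff, ← hCspan]
      refine Submodule.span_le.mpr fun z hz => ?_
      have : z -ᵥ (0 : V) ∈ C -ᵥ C := Set.vsub_mem_vsub hz hzeroC
      rw [vsub_eq_sub, sub_zero] at this
      exact Submodule.subset_span this
    have hUint : (interior C).Nonempty := hCconv.interior_nonempty_iff_affineSpan_eq_top.mpr hCaff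
    obtain ⟨z0, hz0⟩ := hUint
    have hxtC : (⟨x, hxV⟩ : V) ∉ C := fun h => hxc h
    obtain ⟨f, hf⟩ := geometric_hahn_banach_open_point (hCconv.interior) isOpen_interior
      (fun h => hxtC (interior_subset h))
    -- sup bound on C
    have hsup : ∀ y ∈ C, f y ≤ f ⟨x, hxV⟩ := by
      intro y hy
      have hcombo : ∀ N : ℕ, ((N : ℝ) + 1)⁻¹ * f z0 + (1 - ((N : ℝ) + 1)⁻¹) * f y
          < f ⟨x, hxV⟩ := by
        intro N
        have ht0 : (0 : ℝ) < ((N : ℝ) + 1)⁻¹ := by positivity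
        have ht1 : (0 : ℝ) ≤ 1 - ((N : ℝ) + 1)⁻¹ := by
          rw [sub_nonneg]
          apply inv_le_one_of_one_le₀
          push_cast; linarith [Nat.cast_nonneg (α := ℝ) N]
        have hmem : ((N : ℝ) + 1)⁻¹ • z0 + (1 - ((N : ℝ) + 1)⁻¹) • y ∈ interior C := by
          apply hCconv.combo_interior_closure_subset_interior ht0 ht1 (by ring)
          exact Set.add_mem_add (Set.smul_mem_smul_set hz0)
            (Set.smul_mem_smul_set (subset_closure hy))
        have := hf _ hmem
        simpa [map_add, _root_.map_smul, smul_eq_mul] using this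
      have hlim : Filter.Tendsto
          (fun N : ℕ => ((N : ℝ) + 1)⁻¹ * f z0 + (1 - ((N : ℝ) + 1)⁻¹) * f y)
          Filter.atTop (nhds (f y)) := by
        have h0 : Filter.Tendsto (fun N : ℕ => ((N : ℝ) + 1)⁻¹) Filter.atTop (nhds 0) :=
          tendsto_one_div_add_atTop_nhds_zero_nat.congr (by intro N; rw [one_div])
        have := ((h0.mul_const (f z0)).add
          (((tendsto_const_nhds (x := (1:ℝ))).sub h0).mul_const (f y)))
        simpa using this
      exact le_of_tendsto hlim (Filter.Eventually.of_forall fun N => (hcombo N).le)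
    -- extend f to ambient functional
    obtain ⟨W0, hW0⟩ := Submodule.exists_isCompl V
    set π := V.linearProjOfIsCompl W0 hW0 with hπ
    set L : (Fin n → ℝ) →ₗ[ℝ] ℝ := f.toLinearMap.comp π with hL
    have hLV : ∀ (v : Fin n → ℝ) (hv : v ∈ V), L v = f ⟨v, hv⟩ := by
      intro v hv
      rw [hL]
      simp only [LinearMap.comp_apply, ContinuousLinearMap.coe_coe]
      congr 1
      exact Submodule.linearProjOfIsCompl_apply_left hW0 ⟨v, hv⟩
    set ℓ : Fin n → ℝ := fun i => L (Pi.single i 1) with hℓ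
    have hdot : ∀ z, ∑ i, ℓ i * z i = L z := fun z => (linear_eq_dot L z).symm
    -- equality case
    obtain ⟨A0, hA0, hA0eq⟩ := attain hqm hqi happ ℓ
    have hbV : (fun i => γ i A0) ∈ V := Submodule.subset_span ⟨A0, hA0, rfl⟩
    have hbC : (⟨fun i => γ i A0, hbV⟩ : V) ∈ C :=
      subset_convexHull ℝ _ ⟨A0, hA0, rfl⟩
    have hxeq : ∑ i, ℓ i * x i = ∫ s, max (∑ i, ℓ i * q i s) 0 ∂ρ := by
      refine le_antisymm (hx ℓ) ?_
      rw [← hA0eq, hdot, hdot, hLV _ hbV, hLV _ hxV]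
      exact hsup _ hbC
    have hall := hno ℓ hxeq
    have hLzero : ∀ v ∈ V, L v = 0 := by
      intro v hv
      have : V ≤ LinearMap.ker L := by
        rw [hV, Submodule.span_le]
        rintro z ⟨A, hA, rfl⟩
        rw [SetLike.mem_coe, LinearMap.mem_ker, ← hdot]
        exact hall A hA
      exact this hv
    have h1 : f z0 < f ⟨x, hxV⟩ := hf z0 hz0
    rw [← hLV x hxV, hLzero x hxV, ← hLV _ z0.2] at h1
    rw [hLzero _ z0.2] at h1
    exact lt_irrefl 0 h1
  · -- strict separation case
    obtain ⟨f, u, hfu, hux⟩ := geometric_hahn_banach_closed_point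
      (Convex.closure (convex_convexHull ℝ _)) isClosed_closure hclos
    set ℓ : Fin n → ℝ := fun i => f (Pi.single i 1) with hℓ
    have hdot : ∀ z, ∑ i, ℓ i * z i = f z := fun z => (linear_eq_dot (f.toLinearMap) z).symm
    obtain ⟨A0, hA0, hA0eq⟩ := attain hqm hqi happ ℓ
    have hmem : (fun i => γ i A0) ∈ closure (lorenzHull γ) :=
      subset_closure (subset_convexHull ℝ _ ⟨A0, hA0, rfl⟩)
    have h1 := hfu _ hmem
    have h2 := hx ℓ
    rw [← hA0eq] at h2
    rw [← hdot] at h1 hux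
    linarith

lemma mem_hull_of_support_le {Ω : Type*} [MeasurableSpace Ω] {ρ : Measure Ω} [IsFiniteMeasure ρ] :
    ∀ (d : ℕ) (γ : Fin n → SignedMeasure Ω) (q : Fin n → Ω → ℝ),
      (∀ i, Measurable (q i)) → (∀ i, Integrable (q i) ρ) →
      (∀ i (A : Set Ω), MeasurableSet A → γ i A = ∫ x in A, q i x ∂ρ) →
      ∀ x : Fin n → ℝ,
      (∀ ℓ : Fin n → ℝ, ∑ i, ℓ i * x i ≤ ∫ s, max (∑ i, ℓ i * q i s) 0 ∂ρ) →
      Module.finrank ℝ (Submodule.span ℝ (rset γ)) ≤ d →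
      x ∈ lorenzHull γ := by
  intro d
  induction d with
  | zero =>
    intro γ q hqm hqi happ x hx hd
    refine branch2 hqm hqi happ hx ?_
    intro ℓ _ A hA
    have hbot : Submodule.span ℝ (rset γ) = ⊥ := by
      have := Nat.le_zero.mp hd
      exact Submodule.finrank_eq_zero.mp this
    have hz : (fun i => γ i A) ∈ Submodule.span ℝ (rset γ) := Submodule.subset_span ⟨A, hA, rfl⟩
    rw [hbot, Submodule.mem_bot] at hz
    have : ∀ i, γ i A = 0 := fun i => congrFun hz i
    simp [this]
  | succ d ih =>
    intro γ q hqm hqi happ x hx hd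
    by_cases hex : ∃ ℓ : Fin n → ℝ,
        (∑ i, ℓ i * x i = ∫ s, max (∑ i, ℓ i * q i s) 0 ∂ρ) ∧
        ∃ A : Set Ω, MeasurableSet A ∧ ∑ i, ℓ i * γ i A ≠ 0
    swap
    · refine branch2 hqm hqi happ hx ?_
      intro ℓ heq A hA
      by_contra hne
      exact hex ⟨ℓ, heq, A, hA, hne⟩
    obtain ⟨ℓ, heq, A1, hA1, hne⟩ := hex
    have hFm : Measurable fun s => ∑ i, ℓ i * q i s :=
      Finset.measurable_sum _ fun i _ => (hqm i).const_mul _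
    have hFi : Integrable (fun s => ∑ i, ℓ i * q i s) ρ :=
      integrable_finset_sum _ fun i _ => (hqi i).const_mul _
    have hPm : MeasurableSet {s | 0 < ∑ i, ℓ i * q i s} := measurableSet_lt measurable_const hFm
    have hWm : MeasurableSet {s | (∑ i, ℓ i * q i s) = 0} :=
      hFm (measurableSet_singleton 0)
    have hNm : MeasurableSet {s | (∑ i, ℓ i * q i s) < 0} := measurableSet_lt hFm measurable_const
    have hPWN : {s | 0 < ∑ i, ℓ i * q i s}ᶜ
        = {s | (∑ i, ℓ i * q i s) = 0} ∪ {s | (∑ i, ℓ i * q i s) < 0} := by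
      ext s
      simp only [Set.mem_compl_iff, Set.mem_setOf_eq, Set.mem_union, not_lt]
      constructor
      · intro h
        rcases eq_or_lt_of_le h with h' | h'
        · exact Or.inl h'
        · exact Or.inr h'
      · rintro (h | h)
        · exact le_of_eq h
        · exact le_of_lt h
    have hdisjWN : Disjoint {s | (∑ i, ℓ i * q i s) = 0} {s | (∑ i, ℓ i * q i s) < 0} := by
      rw [Set.disjoint_left]
      intro s hs hs'
      simp only [Set.mem_setOf_eq] at hs hs'
      linarith
    have hsplit : ∀ h : Ω → ℝ, Integrable h ρ →
        ∫ s, h s ∂ρ = (∫ s in {s | 0 < ∑ i, ℓ i * q i s}, h s ∂ρ)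
          + ((∫ s in {s | (∑ i, ℓ i * q i s) = 0}, h s ∂ρ)
          + (∫ s in {s | (∑ i, ℓ i * q i s) < 0}, h s ∂ρ)) := by
      intro h hh
      rw [← integral_add_compl hPm hh, hPWN,
        setIntegral_union hdisjWN hNm hh.integrableOn hh.integrableOn]
    have hPint : ∫ s in {s | 0 < ∑ i, ℓ i * q i s}, (∑ i, ℓ i * q i s) ∂ρ
        = ∑ i, ℓ i * x i := by
      rw [heq, integral_pos_part_eq hFm]
    -- key inequality
    have hkey : ∀ m : Fin n → ℝ,
        ∑ i, m i * (x i - γ i {s | 0 < ∑ i, ℓ i * q i s})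
          ≤ ∫ s in {s | (∑ i, ℓ i * q i s) = 0}, max (∑ i, m i * q i s) 0 ∂ρ := by
      intro m
      have hFmm : Measurable fun s => ∑ i, m i * q i s :=
        Finset.measurable_sum _ fun i _ => (hqm i).const_mul _
      have hFmi : Integrable (fun s => ∑ i, m i * q i s) ρ :=
        integrable_finset_sum _ fun i _ => (hqi i).const_mul _
      have hstep : ∀ N : ℕ,
          ∑ i, m i * x i ≤
            (∫ s in {s | 0 < ∑ i, ℓ i * q i s},
                (max ((N:ℝ) * (∑ i, ℓ i * q i s) + ∑ i, m i * q i s) 0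
                  - (N:ℝ) * (∑ i, ℓ i * q i s)) ∂ρ)
            + (∫ s in {s | (∑ i, ℓ i * q i s) = 0}, max (∑ i, m i * q i s) 0 ∂ρ)
            + (∫ s in {s | (∑ i, ℓ i * q i s) < 0},
                max ((N:ℝ) * (∑ i, ℓ i * q i s) + ∑ i, m i * q i s) 0 ∂ρ) := by
        intro N
        have h1 := hx fun i => (N:ℝ) * ℓ i + m i
        have hL : ∑ i, ((N:ℝ) * ℓ i + m i) * x i
            = (N:ℝ) * (∑ i, ℓ i * x i) + ∑ i, m i * x i := by
          rw [Finset.mul_sum, ← Finset.sum_add_distrib]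
          exact Finset.sum_congr rfl fun i _ => by ring
        have hI : ∀ s, (∑ i, ((N:ℝ) * ℓ i + m i) * q i s)
            = (N:ℝ) * (∑ i, ℓ i * q i s) + ∑ i, m i * q i s := by
          intro s
          rw [Finset.mul_sum, ← Finset.sum_add_distrib]
          exact Finset.sum_congr rfl fun i _ => by ring
        simp only [hI, hL] at h1
        have hGi : Integrable
            (fun s => max ((N:ℝ) * (∑ i, ℓ i * q i s) + ∑ i, m i * q i s) 0) ρ :=
          ((hFi.const_mul _).add hFmi).pos_part
        rw [hsplit _ hGi] at h1
        have hWeq : ∫ s in {s | (∑ i, ℓ i * q i s) = 0},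
            max ((N:ℝ) * (∑ i, ℓ i * q i s) + ∑ i, m i * q i s) 0 ∂ρ
            = ∫ s in {s | (∑ i, ℓ i * q i s) = 0}, max (∑ i, m i * q i s) 0 ∂ρ := by
          refine setIntegral_congr_fun hWm fun s hs => ?_
          have : (∑ i, ℓ i * q i s) = 0 := hs
          rw [this, mul_zero, zero_add]
        have hPeq : ∫ s in {s | 0 < ∑ i, ℓ i * q i s},
            max ((N:ℝ) * (∑ i, ℓ i * q i s) + ∑ i, m i * q i s) 0 ∂ρ
            = (∫ s in {s | 0 < ∑ i, ℓ i * q i s},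
                (max ((N:ℝ) * (∑ i, ℓ i * q i s) + ∑ i, m i * q i s) 0
                  - (N:ℝ) * (∑ i, ℓ i * q i s)) ∂ρ)
              + (N:ℝ) * ∫ s in {s | 0 < ∑ i, ℓ i * q i s}, (∑ i, ℓ i * q i s) ∂ρ := by
          rw [integral_sub hGi.integrableOn (hFi.const_mul (N:ℝ)).integrableOn,
            integral_const_mul]
          ring
        rw [hWeq, hPeq, hPint] at h1
        linarith
      -- limits
      have hu : Filter.Tendsto (fun N : ℕ =>
          ∫ s in {s | 0 < ∑ i, ℓ i * q i s},
            (max ((N:ℝ) * (∑ i, ℓ i * q i s) + ∑ i, m i * q i s) 0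
              - (N:ℝ) * (∑ i, ℓ i * q i s)) ∂ρ) Filter.atTop
          (nhds (∫ s in {s | 0 < ∑ i, ℓ i * q i s}, (∑ i, m i * q i s) ∂ρ)) := by
        refine tendsto_integral_of_dominated_convergence (fun s => |∑ i, m i * q i s|)
          (fun N => Measurable.aestronglyMeasurable
            ((((hFm.const_mul _).add hFmm).max measurable_const).sub (hFm.const_mul _)))
          hFmi.abs.integrableOn ?_ ?_
        · intro N
          filter_upwards [ae_restrict_mem hPm] with s hs
          have hFs : 0 < ∑ i, ℓ i * q i s := hs
          have hN0 : (0:ℝ) ≤ (N:ℝ) * (∑ i, ℓ i * q i s) :=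
            mul_nonneg (Nat.cast_nonneg N) hFs.le
          rw [Real.norm_eq_abs]
          rcases le_or_gt 0 ((N:ℝ) * (∑ i, ℓ i * q i s) + ∑ i, m i * q i s) with hc | hc
          · rw [max_eq_left hc]
            rw [show (N:ℝ) * (∑ i, ℓ i * q i s) + (∑ i, m i * q i s)
                - (N:ℝ) * (∑ i, ℓ i * q i s) = ∑ i, m i * q i s by ring]
          · rw [max_eq_right hc.le, zero_sub, abs_neg, abs_of_nonneg hN0]
            have := neg_abs_le (∑ i, m i * q i s)
            linarith
        · filter_upwards [ae_restrict_mem hPm] with s hs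
          have hFs : 0 < ∑ i, ℓ i * q i s := hs
          refine Filter.Tendsto.congr' ?_ tendsto_const_nhds
          rw [Filter.EventuallyEq, Filter.eventually_atTop]
          refine ⟨⌈|∑ i, m i * q i s| / (∑ i, ℓ i * q i s)⌉₊, fun N hN => ?_⟩
          have h2 : |∑ i, m i * q i s| / (∑ i, ℓ i * q i s) ≤ (N:ℝ) :=
            le_trans (Nat.le_ceil _) (by exact_mod_cast hN)
          have h3 : |∑ i, m i * q i s| ≤ (N:ℝ) * (∑ i, ℓ i * q i s) := by
            rw [div_le_iff₀ hFs] at h2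
            linarith
          have h4 : (0:ℝ) ≤ (N:ℝ) * (∑ i, ℓ i * q i s) + ∑ i, m i * q i s := by
            have := neg_abs_le (∑ i, m i * q i s)
            linarith
          rw [max_eq_left h4]
          ring
      have hv : Filter.Tendsto (fun N : ℕ =>
          ∫ s in {s | (∑ i, ℓ i * q i s) < 0},
            max ((N:ℝ) * (∑ i, ℓ i * q i s) + ∑ i, m i * q i s) 0 ∂ρ) Filter.atTop
          (nhds 0) := by
        have hv0 : Filter.Tendsto (fun N : ℕ =>
            ∫ s in {s | (∑ i, ℓ i * q i s) < 0},
              max ((N:ℝ) * (∑ i, ℓ i * q i s) + ∑ i, m i * q i s) 0 ∂ρ) Filter.atTop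
            (nhds (∫ _ in {s | (∑ i, ℓ i * q i s) < 0}, (0:ℝ) ∂ρ)) := by
          refine tendsto_integral_of_dominated_convergence (fun s => |∑ i, m i * q i s|)
            (fun N => (((hFm.const_mul _).add hFmm).max measurable_const).aestronglyMeasurable)
            hFmi.abs.integrableOn ?_ ?_
          · intro N
            filter_upwards [ae_restrict_mem hNm] with s hs
            have hFs : (∑ i, ℓ i * q i s) < 0 := hs
            have hN0 : (N:ℝ) * (∑ i, ℓ i * q i s) ≤ 0 :=
              mul_nonpos_of_nonneg_of_nonpos (Nat.cast_nonneg N) hFs.le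
            rw [Real.norm_eq_abs, abs_of_nonneg (le_max_right _ _)]
            refine max_le ?_ (abs_nonneg _)
            have := le_abs_self (∑ i, m i * q i s)
            linarith
          · filter_upwards [ae_restrict_mem hNm] with s hs
            have hFs : (∑ i, ℓ i * q i s) < 0 := hs
            refine Filter.Tendsto.congr' ?_ tendsto_const_nhds
            rw [Filter.EventuallyEq, Filter.eventually_atTop]
            refine ⟨⌈|∑ i, m i * q i s| / (-(∑ i, ℓ i * q i s))⌉₊, fun N hN => ?_⟩
            have hpos : (0:ℝ) < -(∑ i, ℓ i * q i s) := by linarith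
            have h2 : |∑ i, m i * q i s| / (-(∑ i, ℓ i * q i s)) ≤ (N:ℝ) :=
              le_trans (Nat.le_ceil _) (by exact_mod_cast hN)
            have h3 : |∑ i, m i * q i s| ≤ (N:ℝ) * (-(∑ i, ℓ i * q i s)) := by
              rw [div_le_iff₀ hpos] at h2
              linarith
            have h4 : (N:ℝ) * (∑ i, ℓ i * q i s) + (∑ i, m i * q i s) ≤ 0 := by
              have := le_abs_self (∑ i, m i * q i s)
              linarith
            rw [max_eq_right h4]
        simpa using hv0
      have hlim : Filter.Tendsto (fun N : ℕ =>
          (∫ s in {s | 0 < ∑ i, ℓ i * q i s},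
            (max ((N:ℝ) * (∑ i, ℓ i * q i s) + ∑ i, m i * q i s) 0
              - (N:ℝ) * (∑ i, ℓ i * q i s)) ∂ρ)
          + (∫ s in {s | (∑ i, ℓ i * q i s) = 0}, max (∑ i, m i * q i s) 0 ∂ρ)
          + (∫ s in {s | (∑ i, ℓ i * q i s) < 0},
              max ((N:ℝ) * (∑ i, ℓ i * q i s) + ∑ i, m i * q i s) 0 ∂ρ)) Filter.atTop
          (nhds ((∫ s in {s | 0 < ∑ i, ℓ i * q i s}, (∑ i, m i * q i s) ∂ρ)
            + (∫ s in {s | (∑ i, ℓ i * q i s) = 0}, max (∑ i, m i * q i s) 0 ∂ρ) + 0)) :=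
        (hu.add tendsto_const_nhds).add hv
      have hfin := ge_of_tendsto hlim (Filter.Eventually.of_forall hstep)
      have hsum : ∑ i, m i * (x i - γ i {s | 0 < ∑ i, ℓ i * q i s})
          = (∑ i, m i * x i)
            - ∑ i, m i * γ i {s | 0 < ∑ i, ℓ i * q i s} := by
        rw [← Finset.sum_sub_distrib]
        exact Finset.sum_congr rfl fun i _ => by ring
      rw [hsum, dot_density hqi happ m hPm]
      linarith
    -- construct the restricted data
    have hq'm : ∀ i, Measurable ({s | (∑ i, ℓ i * q i s) = 0}.indicator (q i)) :=
      fun i => (hqm i).indicator hWm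
    have hq'i : ∀ i, Integrable ({s | (∑ i, ℓ i * q i s) = 0}.indicator (q i)) ρ :=
      fun i => (hqi i).indicator hWm
    have happ' : ∀ i (A : Set Ω), MeasurableSet A →
        (γ i).restrict {s | (∑ i, ℓ i * q i s) = 0} A
          = ∫ x in A, {s | (∑ i, ℓ i * q i s) = 0}.indicator (q i) x ∂ρ := by
      intro i A hA
      rw [VectorMeasure.restrict_apply _ hWm hA, happ i _ (hA.inter hWm),
        setIntegral_indicator hWm]
    have hx' : ∀ m : Fin n → ℝ,
        ∑ i, m i * (x i - γ i {s | 0 < ∑ i, ℓ i * q i s})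
          ≤ ∫ s, max (∑ i, m i * {s | (∑ i, ℓ i * q i s) = 0}.indicator (q i) s) 0 ∂ρ := by
      intro m
      refine le_trans (hkey m) (le_of_eq ?_)
      have hpt : ∀ s, max (∑ i, m i * {s | (∑ i, ℓ i * q i s) = 0}.indicator (q i) s) 0
          = {s | (∑ i, ℓ i * q i s) = 0}.indicator
              (fun s => max (∑ i, m i * q i s) 0) s := by
        intro s
        by_cases hs : s ∈ {s | (∑ i, ℓ i * q i s) = 0}
        · rw [Set.indicator_of_mem hs]
          congr 1
          exact Finset.sum_congr rfl fun i _ => by rw [Set.indicator_of_mem hs]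
        · rw [Set.indicator_of_notMem hs]
          have : ∀ i, {s | (∑ i, ℓ i * q i s) = 0}.indicator (q i) s = 0 :=
            fun i => Set.indicator_of_notMem hs _
          simp [this]
      rw [← integral_indicator hWm]
      exact integral_congr_ae (Filter.Eventually.of_forall fun s => (hpt s).symm)
    -- rank decreases
    have hsub1 : rset (fun i => (γ i).restrict {s | (∑ i, ℓ i * q i s) = 0}) ⊆ rset γ := by
      rintro z ⟨A, hA, rfl⟩
      exact ⟨A ∩ {s | (∑ i, ℓ i * q i s) = 0}, hA.inter hWm,
        funext fun i => VectorMeasure.restrict_apply _ hWm hA⟩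
    have hker : rset (fun i => (γ i).restrict {s | (∑ i, ℓ i * q i s) = 0})
        ⊆ (LinearMap.ker (dotL ℓ) : Set (Fin n → ℝ)) := by
      rintro z ⟨A, hA, rfl⟩
      rw [SetLike.mem_coe, LinearMap.mem_ker]
      show (∑ i, ℓ i * (γ i).restrict {s | (∑ i, ℓ i * q i s) = 0} A) = 0
      have : ∀ i, (γ i).restrict {s | (∑ i, ℓ i * q i s) = 0} A
          = γ i (A ∩ {s | (∑ i, ℓ i * q i s) = 0}) :=
        fun i => VectorMeasure.restrict_apply _ hWm hA
      simp only [this]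
      rw [dot_density hqi happ ℓ (hA.inter hWm)]
      rw [setIntegral_congr_fun (hA.inter hWm) (g := fun _ => (0:ℝ)) fun s hs => hs.2]
      simp
    have hlt : Submodule.span ℝ (rset (fun i => (γ i).restrict {s | (∑ i, ℓ i * q i s) = 0}))
        < Submodule.span ℝ (rset γ) := by
      refine lt_of_le_of_ne (Submodule.span_mono hsub1) fun hcontra => ?_
      have h1 : (fun i => γ i A1) ∈ Submodule.span ℝ (rset γ) :=
        Submodule.subset_span ⟨A1, hA1, rfl⟩
      rw [← hcontra] at h1
      have h2 : (fun i => γ i A1) ∈ LinearMap.ker (dotL ℓ) := by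
        have := Submodule.span_le.mpr hker
        exact this h1
      rw [LinearMap.mem_ker] at h2
      exact hne h2
    have hrank : Module.finrank ℝ
        (Submodule.span ℝ (rset (fun i => (γ i).restrict {s | (∑ i, ℓ i * q i s) = 0}))) ≤ d :=
      Nat.lt_succ_iff.mp (lt_of_lt_of_le (Submodule.finrank_lt_finrank_of_lt hlt) hd)
    have hmem' := ih (fun i => (γ i).restrict {s | (∑ i, ℓ i * q i s) = 0})
      (fun i => {s | (∑ i, ℓ i * q i s) = 0}.indicator (q i)) hq'm hq'i happ'
      (fun i => x i - γ i {s | 0 < ∑ i, ℓ i * q i s}) hx' hrank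
    -- transfer back
    have htrans : ((fun i => γ i {s | 0 < ∑ i, ℓ i * q i s})
        +ᵥ lorenzHull (fun i => (γ i).restrict {s | (∑ i, ℓ i * q i s) = 0})
        : Set (Fin n → ℝ)) ⊆ lorenzHull γ := by
      rw [lorenzHull_eq, lorenzHull_eq, ← convexHull_vadd]
      refine convexHull_mono ?_
      rintro z ⟨w, ⟨A, hA, rfl⟩, rfl⟩
      refine ⟨{s | 0 < ∑ i, ℓ i * q i s} ∪ (A ∩ {s | (∑ i, ℓ i * q i s) = 0}),
        hPm.union (hA.inter hWm), funext fun i => ?_⟩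
      have hdisj : Disjoint {s | 0 < ∑ i, ℓ i * q i s}
          (A ∩ {s | (∑ i, ℓ i * q i s) = 0}) := by
        rw [Set.disjoint_left]
        intro s hs hs'
        have h1 : 0 < ∑ i, ℓ i * q i s := hs
        have h2 : (∑ i, ℓ i * q i s) = 0 := hs'.2
        linarith
      have huni := (γ i).of_union hdisj hPm (hA.inter hWm)
      show γ i {s | 0 < ∑ i, ℓ i * q i s}
          + (γ i).restrict {s | (∑ i, ℓ i * q i s) = 0} A
        = γ i ({s | 0 < ∑ i, ℓ i * q i s} ∪ (A ∩ {s | (∑ i, ℓ i * q i s) = 0}))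
      rw [huni, VectorMeasure.restrict_apply _ hWm hA]
    have hxeq : x = (fun i => γ i {s | 0 < ∑ i, ℓ i * q i s})
        +ᵥ (fun i => x i - γ i {s | 0 < ∑ i, ℓ i * q i s}) := by
      funext i
      show x i = γ i {s | 0 < ∑ i, ℓ i * q i s} + (x i - γ i {s | 0 < ∑ i, ℓ i * q i s})
      ring
    rw [hxeq]
    exact htrans (Set.vadd_mem_vadd_set hmem')

end LorenzProof

theorem lorenzHull_product_mono
    {n : ℕ} {S S' T T' : Type*}
    [MeasurableSpace S] [MeasurableSpace S'] [MeasurableSpace T] [MeasurableSpace T']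
    (α : Fin n → SignedMeasure S) (α' : Fin n → SignedMeasure S')
    (β : Fin n → SignedMeasure T) (β' : Fin n → SignedMeasure T')
    (ω : Fin n → SignedMeasure (S × T))
    (hω : ∀ i A B, MeasurableSet A → MeasurableSet B →
      ω i (A ×ˢ B) = α i A * β i B)
    (ω' : Fin n → SignedMeasure (S' × T'))
    (hω' : ∀ i A B, MeasurableSet A → MeasurableSet B →
      ω' i (A ×ˢ B) = α' i A * β' i B)
    (hα : lorenzHull α ⊆ lorenzHull α') (hβ : lorenzHull β ⊆ lorenzHull β') :
    lorenzHull ω ⊆ lorenzHull ω' := by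
  classical
  obtain ⟨μ, g, hμfin, hgm, hgi, hga⟩ := LorenzProof.exists_density α
  obtain ⟨ν, k, hνfin, hkm, hki, hka⟩ := LorenzProof.exists_density β
  obtain ⟨μ', g', hμ'fin, hg'm, hg'i, hg'a⟩ := LorenzProof.exists_density α'
  obtain ⟨ν', k', hν'fin, hk'm, hk'i, hk'a⟩ := LorenzProof.exists_density β'
  have hωa : ∀ (i : Fin n) (C : Set (S × T)), MeasurableSet C →
      ω i C = ∫ p in C, g i p.1 * k i p.2 ∂(μ.prod ν) :=
    fun i C hC => LorenzProof.prod_density hω hgi hga hki hka i hC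
  have hω'a : ∀ (i : Fin n) (C : Set (S' × T')), MeasurableSet C →
      ω' i C = ∫ p in C, g' i p.1 * k' i p.2 ∂(μ'.prod ν') :=
    fun i C hC => LorenzProof.prod_density hω' hg'i hg'a hk'i hk'a i hC
  show convexHull ℝ (LorenzProof.rset ω) ⊆ lorenzHull ω'
  refine convexHull_min ?_ (convex_convexHull ℝ _)
  rintro z ⟨C, hC, rfl⟩
  refine LorenzProof.mem_hull_of_support_le
    (Module.finrank ℝ (Submodule.span ℝ (LorenzProof.rset ω'))) ω'
    (fun i p => g' i p.1 * k' i p.2)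
    (fun i => ((hg'm i).comp measurable_fst).mul ((hk'm i).comp measurable_snd))
    (fun i => (hg'i i).mul_prod (hk'i i)) hω'a _ ?_ le_rfl
  intro ℓ
  calc ∑ i, ℓ i * ω i C
      = ∫ p in C, (∑ i, ℓ i * (g i p.1 * k i p.2)) ∂(μ.prod ν) :=
        LorenzProof.dot_density (γ := ω) (fun i => (hgi i).mul_prod (hki i)) hωa ℓ hC
    _ ≤ ∫ p, max (∑ i, ℓ i * (g i p.1 * k i p.2)) 0 ∂(μ.prod ν) :=
        LorenzProof.setIntegral_le_pos_part
          (integrable_finset_sum _ fun i _ => ((hgi i).mul_prod (hki i)).const_mul (ℓ i)) C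
    _ ≤ ∫ p, max (∑ i, ℓ i * (g' i p.1 * k' i p.2)) 0 ∂(μ'.prod ν') :=
        LorenzProof.chain hgm hgi hga hkm hki hka hg'm hg'i hg'a hk'm hk'i hk'a hα hβ ℓ
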